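/- Let n ≥ 1, N ≥ 1 and d ≥ 2N + 3n − 1 be integers. Let p_1, …, p_N ∈ ℂ³, p_i = (x_i, y_i, z_i), be points with (x_i, y_i) ≠ (0,0) for all i and with the classes [x_i : y_i] ∈ P¹ pairwise distinct (so the p_i represent N points of 𝔽_n, none on the exceptional section E_n, lying on N distinct lines of the ruling). Then the ℂ-linear evaluation map ev : V_{d,n} → Mat_{3×N}(ℂ), sending f to the matrix whose i-th column is (∂f/∂x(p_i), ∂f/∂y(p_i), ∂f/∂z(p_i)), is surjective. -/

import Mathlib

open MvPolynomial

noncomputable section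

/-- The weights on the variables `x, y, z`: `deg x = deg y = 1`, `deg z = n`. -/
def wt (n : ℕ) : Fin 3 → ℕ := ![1, 1, n]

/-- The subspace of `ℂ[x,y,z]` of polynomials whose degree in `z` is at most `h`. -/
def degZle (h : ℕ) : Submodule ℂ (MvPolynomial (Fin 3) ℂ) where
  carrier := {f | f.degreeOf 2 ≤ h}
  zero_mem' := by simp [Set.mem_setOf_eq, degreeOf_zero]
  add_mem' := by
    intro f g hf hg
    exact le_trans (degreeOf_add_le _ _ _) (max_le hf hg)
  smul_mem' := by
    intro c f hf
    rw [Set.mem_setOf_eq, smul_eq_C_mul]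
    exact le_trans (degreeOf_C_mul_le _ _ _) hf

/-- `V^{(h)}_{d,n}`: the space of polynomials in `ℂ[x,y,z]` that are weighted homogeneous of
degree `d` for the weights `deg x = deg y = 1`, `deg z = n`, and have degree at most `h` in `z`.
This is the space of global sections of `O(hEₙ + dFₙ)` on the Hirzebruch surface `𝔽ₙ`. -/
def Vh (h d n : ℕ) : Submodule ℂ (MvPolynomial (Fin 3) ℂ) :=
  weightedHomogeneousSubmodule ℂ (wt n) d ⊓ degZle h

/-- `V_{d,n}`, the space of global sections of `O(3Eₙ + dFₙ)` on `𝔽ₙ`. -/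
def V (d n : ℕ) : Submodule ℂ (MvPolynomial (Fin 3) ℂ) := Vh 3 d n

/-- `f` is singular at the point `p`: all partial derivatives of `f` vanish at `p`. -/
def SingularAt {σ : Type*} (f : MvPolynomial σ ℂ) (p : σ → ℂ) : Prop :=
  ∀ i, eval p (pderiv i f) = 0

/-- The subspace of polynomials singular at every point of the family `p`. -/
def singSub {ι σ : Type*} (p : ι → σ → ℂ) : Submodule ℂ (MvPolynomial σ ℂ) where
  carrier := {f | ∀ j, SingularAt f (p j)}
  zero_mem' := by intro j i; simp
  add_mem' := by
    intro f g hf hg j i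
    simp [map_add, hf j i, hg j i]
  smul_mem' := by
    intro c f hf j i
    simp [smul_eq_C_mul, pderiv_C_mul, hf j i]

/-! ### Auxiliary machinery -/

def lin (u v : ℂ) : MvPolynomial (Fin 3) ℂ := C u * X 0 + C v * X 1

lemma lin_eval (u v : ℂ) (q : Fin 3 → ℂ) : eval q (lin u v) = u * q 0 + v * q 1 := by
  simp [lin]

lemma lin_pd0 (u v : ℂ) : pderiv 0 (lin u v) = C u := by
  simp [lin, pderiv_X_of_ne (show (1:Fin 3) ≠ 0 by decide)]

lemma lin_pd1 (u v : ℂ) : pderiv 1 (lin u v) = C v := by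
  simp [lin, pderiv_X_of_ne (show (0:Fin 3) ≠ 1 by decide)]

lemma lin_pd2 (u v : ℂ) : pderiv 2 (lin u v) = 0 := by
  simp [lin, pderiv_X_of_ne (show (0:Fin 3) ≠ 2 by decide),
    pderiv_X_of_ne (show (1:Fin 3) ≠ 2 by decide)]

lemma lin_hom (n : ℕ) (u v : ℂ) : IsWeightedHomogeneous (wt n) (lin u v) 1 := by
  have h0 : IsWeightedHomogeneous (wt n) (C u * X 0 : MvPolynomial (Fin 3) ℂ) 1 := by
    have := (isWeightedHomogeneous_C (wt n) u).mul (isWeightedHomogeneous_X ℂ (wt n) 0)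
    simpa [wt] using this
  have h1 : IsWeightedHomogeneous (wt n) (C v * X 1 : MvPolynomial (Fin 3) ℂ) 1 := by
    have := (isWeightedHomogeneous_C (wt n) v).mul (isWeightedHomogeneous_X ℂ (wt n) 1)
    simpa [wt] using this
  exact h0.add h1

lemma lin_pow_hom (n : ℕ) (u v : ℂ) : ∀ e : ℕ, IsWeightedHomogeneous (wt n) (lin u v ^ e) e
  | 0 => by
    rw [pow_zero]
    exact isWeightedHomogeneous_one ℂ (wt n)
  | (e+1) => by
    rw [pow_succ]
    exact (lin_pow_hom n u v e).mul (lin_hom n u v)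

lemma lin_degZ (u v : ℂ) : degreeOf 2 (lin u v) = 0 := by
  refine Nat.le_zero.mp ?_
  refine le_trans (degreeOf_add_le _ _ _) ?_
  have h0 : degreeOf 2 (C u * X 0 : MvPolynomial (Fin 3) ℂ) ≤ 0 := by
    refine le_trans (degreeOf_mul_le _ _ _) ?_
    simp [degreeOf_C, degreeOf_X]
  have h1 : degreeOf 2 (C v * X 1 : MvPolynomial (Fin 3) ℂ) ≤ 0 := by
    refine le_trans (degreeOf_mul_le _ _ _) ?_
    simp [degreeOf_C, degreeOf_X]
  simp [Nat.le_zero.mp h0, Nat.le_zero.mp h1]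

lemma lin_pow_degZ (u v : ℂ) (e : ℕ) : degreeOf 2 (lin u v ^ e) = 0 :=
  Nat.le_zero.mp (le_trans (degreeOf_pow_le _ _ _) (by simp [lin_degZ]))

def sqProd {ι : Type*} (s : Finset ι) (u v : ι → ℂ) : MvPolynomial (Fin 3) ℂ :=
  ∏ k ∈ s, (lin (u k) (v k))^2

lemma sqProd_hom {ι : Type*} (n : ℕ) (s : Finset ι) (u v : ι → ℂ) :
    IsWeightedHomogeneous (wt n) (sqProd s u v) (2 * s.card) := by
  have := IsWeightedHomogeneous.prod s (fun k => (lin (u k) (v k))^2) (fun _ => 2)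
    (w := wt n) (fun k _ => by
      have := (lin_hom n (u k) (v k)).mul (lin_hom n (u k) (v k))
      simpa [sq] using this)
  simpa [sqProd, Finset.sum_const, mul_comm] using this

lemma sqProd_degZ {ι : Type*} (s : Finset ι) (u v : ι → ℂ) :
    degreeOf 2 (sqProd s u v) = 0 := by
  refine Nat.le_zero.mp (le_trans (degreeOf_prod_le _ _ _) ?_)
  have : ∀ k ∈ s, degreeOf 2 ((lin (u k) (v k))^2) ≤ 0 := fun k _ =>
    le_trans (degreeOf_pow_le _ _ _) (by simp [lin_degZ])
  calc ∑ k ∈ s, degreeOf 2 ((lin (u k) (v k))^2) ≤ ∑ _k ∈ s, 0 := Finset.sum_le_sum this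
    _ = 0 := by simp

lemma sqProd_pd2 {ι : Type*} [DecidableEq ι] (s : Finset ι) (u v : ι → ℂ) :
    pderiv 2 (sqProd s u v) = 0 := by
  induction s using Finset.cons_induction with
  | empty => simp [sqProd]
  | cons k s hk ih =>
    rw [sqProd, Finset.prod_cons, pderiv_mul, ← sqProd, ih, pderiv_pow, lin_pd2]
    ring

lemma sqProd_euler {ι : Type*} [DecidableEq ι] (q : Fin 3 → ℂ) (s : Finset ι) (u v : ι → ℂ) :
    q 0 * eval q (pderiv 0 (sqProd s u v)) + q 1 * eval q (pderiv 1 (sqProd s u v))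
      = 2 * s.card * eval q (sqProd s u v) := by
  induction s using Finset.cons_induction with
  | empty => simp [sqProd]
  | cons k s hk ih =>
    rw [sqProd, Finset.prod_cons, ← sqProd]
    rw [pderiv_mul, pderiv_mul, pderiv_pow, pderiv_pow, lin_pd0, lin_pd1]
    simp only [map_add, map_mul, eval_pow, eval_C, Finset.card_cons, lin_eval, map_natCast,
      map_ofNat]
    push_cast
    linear_combination (u k * q 0 + v k * q 1)^2 * ih

lemma sqProd_eval {ι : Type*} (q : Fin 3 → ℂ) (s : Finset ι) (u v : ι → ℂ) :
    eval q (sqProd s u v) = ∏ k ∈ s, (u k * q 0 + v k * q 1)^2 := by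
  simp [sqProd, lin_eval]

lemma sqProd_root {ι : Type*} [DecidableEq ι] (q : Fin 3 → ℂ) (s : Finset ι) (u v : ι → ℂ)
    (k : ι) (hk : k ∈ s) (h : u k * q 0 + v k * q 1 = 0) :
    eval q (sqProd s u v) = 0 ∧ ∀ i, eval q (pderiv i (sqProd s u v)) = 0 := by
  constructor
  · rw [sqProd_eval]
    exact Finset.prod_eq_zero hk (by rw [h]; ring)
  · intro i
    have hfac : sqProd s u v = (lin (u k) (v k))^2 * sqProd (s.erase k) u v :=
      (Finset.mul_prod_erase s (fun k => (lin (u k) (v k))^2) hk).symm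
    rw [hfac, pderiv_mul, pderiv_pow]
    simp only [map_add, map_mul, eval_pow, lin_eval, h]
    ring

lemma grad_mul (q : Fin 3 → ℂ) (A B : MvPolynomial (Fin 3) ℂ) (i : Fin 3) :
    eval q (pderiv i (A * B)) =
      eval q (pderiv i A) * eval q B + eval q A * eval q (pderiv i B) := by
  rw [pderiv_mul]; simp

lemma cramer2 (A B C' D' t0 t1 : ℂ) (h : A * D' - B * C' ≠ 0) :
    ∃ x y : ℂ, A * x + B * y = t0 ∧ C' * x + D' * y = t1 := by
  refine ⟨(t0 * D' - t1 * B) / (A * D' - B * C'), (A * t1 - C' * t0) / (A * D' - B * C'), ?_, ?_⟩ <;>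
    rw [mul_div_assoc', mul_div_assoc', ← add_div, div_eq_iff h] <;> ring

lemma solve3 (a b c la lb g g0 g1 S W e M1s dd q1s v0 v1 v2 : ℂ)
    (hlam0 : la * a + lb * b ≠ 0) (hg : g ≠ 0)
    (hdd : dd ≠ 0) (hS : S ≠ 0) (hW : W ≠ 0)
    (hEuler : a * g0 + b * g1 = e * g) (hsum : e + M1s = dd) :
    ∃ c1 c2 c3 : ℂ,
      c1 * (g0 * (W * (la * a + lb * b) * c) + g * (q1s * W * la * c)) +
        c2 * (g0 * (S * (la * a + lb * b)) + g * (M1s * S * la)) + c3 * (g * (b * S)) = v0 ∧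
      c1 * (g1 * (W * (la * a + lb * b) * c) + g * (q1s * W * lb * c)) +
        c2 * (g1 * (S * (la * a + lb * b)) + g * (M1s * S * lb)) + c3 * (g * (-a * S)) = v1 ∧
      c1 * (g * (W * (la * a + lb * b))) = v2 := by
  set lam := la * a + lb * b with hlam
  set c1 := v2 / (g * (W * lam)) with hc1
  have hdet : (g0 * (S * lam) + g * (M1s * S * la)) * (g * (-a * S)) -
      (g * (b * S)) * (g1 * (S * lam) + g * (M1s * S * lb)) ≠ 0 := by
    have : (g0 * (S * lam) + g * (M1s * S * la)) * (g * (-a * S)) -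
        (g * (b * S)) * (g1 * (S * lam) + g * (M1s * S * lb)) = -(g^2 * S^2 * lam * dd) := by
      rw [← hsum, hlam]
      linear_combination (-(g * S^2 * (la * a + lb * b))) * hEuler
    rw [this]
    simp only [neg_ne_zero]
    exact mul_ne_zero (mul_ne_zero (mul_ne_zero (pow_ne_zero _ hg) (pow_ne_zero _ hS)) hlam0) hdd
  obtain ⟨c2, c3, h2, h3⟩ := cramer2 _ _ _ _
    (v0 - c1 * (g0 * (W * lam * c) + g * (q1s * W * la * c)))
    (v1 - c1 * (g1 * (W * lam * c) + g * (q1s * W * lb * c))) hdet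
  refine ⟨c1, c2, c3, by linear_combination h2, by linear_combination h3, ?_⟩
  rw [hc1]
  field_simp

-- evaluation of building blocks
lemma evalR1 (u v : ℂ) (e : ℕ) (q : Fin 3 → ℂ) :
    eval q (lin u v ^ e * X 2) = (u * q 0 + v * q 1) ^ e * q 2 ∧
    eval q (pderiv 0 (lin u v ^ e * X 2)) = ((e : ℂ) * (u * q 0 + v * q 1) ^ (e-1) * u) * q 2 ∧
    eval q (pderiv 1 (lin u v ^ e * X 2)) = ((e : ℂ) * (u * q 0 + v * q 1) ^ (e-1) * v) * q 2 ∧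
    eval q (pderiv 2 (lin u v ^ e * X 2)) = (u * q 0 + v * q 1) ^ e := by
  refine ⟨by simp [lin_eval], ?_, ?_, ?_⟩ <;>
  · rw [pderiv_mul, pderiv_pow]
    simp [lin_pd0, lin_pd1, lin_pd2, pderiv_X_self,
      pderiv_X_of_ne (show (2:Fin 3) ≠ 0 by decide),
      pderiv_X_of_ne (show (2:Fin 3) ≠ 1 by decide), lin_eval]
    try ring

lemma evalR2 (u v : ℂ) (e : ℕ) (q : Fin 3 → ℂ) :
    eval q (lin u v ^ e) = (u * q 0 + v * q 1) ^ e ∧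
    eval q (pderiv 0 (lin u v ^ e)) = (e : ℂ) * (u * q 0 + v * q 1) ^ (e-1) * u ∧
    eval q (pderiv 1 (lin u v ^ e)) = (e : ℂ) * (u * q 0 + v * q 1) ^ (e-1) * v ∧
    eval q (pderiv 2 (lin u v ^ e)) = 0 := by
  refine ⟨by simp [lin_eval], ?_, ?_, ?_⟩ <;>
  · rw [pderiv_pow]
    simp [lin_pd0, lin_pd1, lin_pd2, lin_eval]
    try ring

lemma evalR3 (u' v' u v : ℂ) (e : ℕ) (q : Fin 3 → ℂ) (h : u' * q 0 + v' * q 1 = 0) :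
    eval q (lin u' v' * lin u v ^ e) = 0 ∧
    eval q (pderiv 0 (lin u' v' * lin u v ^ e)) = u' * (u * q 0 + v * q 1) ^ e ∧
    eval q (pderiv 1 (lin u' v' * lin u v ^ e)) = v' * (u * q 0 + v * q 1) ^ e ∧
    eval q (pderiv 2 (lin u' v' * lin u v ^ e)) = 0 := by
  refine ⟨by simp [lin_eval, h], ?_, ?_, ?_⟩ <;>
  · rw [pderiv_mul, pderiv_pow]
    simp [lin_pd0, lin_pd1, lin_pd2, lin_eval, h]

lemma onePoint (n N d : ℕ) (hn : 1 ≤ n) (hN : 1 ≤ N) (hd : 2 * N + 3 * n - 1 ≤ d)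
    (p : Fin N → Fin 3 → ℂ)
    (hp : ∀ j, (p j 0, p j 1) ≠ (0, 0))
    (hdist : ∀ j j', j ≠ j' → p j 0 * p j' 1 ≠ p j' 0 * p j 1)
    (j : Fin N) (v : Fin 3 → ℂ) :
    ∃ f, f ∈ V d n ∧ (∀ i, eval (p j) (pderiv i f) = v i) ∧
      ∀ k, k ≠ j → ∀ i, eval (p k) (pderiv i f) = 0 := by
  classical
  set M1 := d - 2 * (N - 1) with hM1def
  set q1 := M1 - n with hq1def
  have hM1n : n + 1 ≤ M1 := by omega
  have hM1d : 2 * (N - 1) + M1 = d := by omega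
  have hq1n : q1 + n = M1 := by omega
  have hq11 : 1 ≤ q1 := by omega
  -- the point
  have hab : ¬(p j 0 = 0 ∧ p j 1 = 0) := by
    intro h
    exact hp j (by rw [h.1, h.2])
  set la := (starRingEnd ℂ) (p j 0) with hla
  set lb := (starRingEnd ℂ) (p j 1) with hlb
  have hlam0 : la * p j 0 + lb * p j 1 ≠ 0 := by
    rw [hla, hlb]
    intro h
    rw [mul_comm _ (p j 0), mul_comm _ (p j 1), Complex.mul_conj, Complex.mul_conj,
      ← Complex.ofReal_add, Complex.ofReal_eq_zero] at h
    have h0 := Complex.normSq_nonneg (p j 0)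
    have h1 := Complex.normSq_nonneg (p j 1)
    exact hab ⟨Complex.normSq_eq_zero.mp (by linarith),
      Complex.normSq_eq_zero.mp (by linarith)⟩
  -- the product polynomial, abstracted
  obtain ⟨P, hPhom, hPz, hPpd2, hgne, hEuler, hvanish⟩ :
      ∃ P : MvPolynomial (Fin 3) ℂ,
        IsWeightedHomogeneous (wt n) P (2 * (N - 1)) ∧
        degreeOf 2 P = 0 ∧
        pderiv 2 P = 0 ∧
        eval (p j) P ≠ 0 ∧
        (p j 0 * eval (p j) (pderiv 0 P) + p j 1 * eval (p j) (pderiv 1 P)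
          = 2 * ((N - 1 : ℕ) : ℂ) * eval (p j) P) ∧
        ∀ k, k ≠ j → eval (p k) P = 0 ∧ ∀ i, eval (p k) (pderiv i P) = 0 := by
    refine ⟨sqProd (Finset.univ.erase j) (fun k => p k 1) (fun k => -(p k 0)), ?_, ?_, ?_, ?_, ?_, ?_⟩
    · have := sqProd_hom n (Finset.univ.erase j) (fun k => p k 1) (fun k => -(p k 0))
      rwa [Finset.card_erase_of_mem (Finset.mem_univ j), Finset.card_univ,
        Fintype.card_fin] at this
    · exact sqProd_degZ _ _ _
    · exact sqProd_pd2 _ _ _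
    · rw [sqProd_eval]
      refine Finset.prod_ne_zero_iff.mpr fun k hk => ?_
      have hkj : k ≠ j := (Finset.mem_erase.mp hk).1
      refine pow_ne_zero _ fun h0 => hdist j k (Ne.symm hkj) ?_
      linear_combination h0
    · have := sqProd_euler (p j) (Finset.univ.erase j) (fun k => p k 1) (fun k => -(p k 0))
      rwa [Finset.card_erase_of_mem (Finset.mem_univ j), Finset.card_univ,
        Fintype.card_fin] at this
    · intro k hkj
      exact sqProd_root (p k) _ _ _ k
        (Finset.mem_erase.mpr ⟨hkj, Finset.mem_univ k⟩) (by ring)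
  -- scalar data
  have hdd : ((d : ℕ) : ℂ) ≠ 0 := Nat.cast_ne_zero.mpr (by omega)
  have hsumC : ((2 * (N - 1) : ℕ) : ℂ) + (M1 : ℂ) = (d : ℂ) := by exact_mod_cast congrArg (Nat.cast : ℕ → ℂ) hM1d
  have hEuler' : p j 0 * eval (p j) (pderiv 0 P) + p j 1 * eval (p j) (pderiv 1 P)
      = ((2 * (N - 1) : ℕ) : ℂ) * eval (p j) P := by
    rw [hEuler]; push_cast; ring
  obtain ⟨c1, c2, c3, hs0, hs1, hs2⟩ := solve3 (p j 0) (p j 1) (p j 2) la lb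
    (eval (p j) P) (eval (p j) (pderiv 0 P)) (eval (p j) (pderiv 1 P))
    ((la * p j 0 + lb * p j 1) ^ (M1 - 1)) ((la * p j 0 + lb * p j 1) ^ (q1 - 1))
    ((2 * (N - 1) : ℕ) : ℂ) (M1 : ℂ) (d : ℂ) (q1 : ℂ) (v 0) (v 1) (v 2)
    hlam0 hgne hdd (pow_ne_zero _ hlam0) (pow_ne_zero _ hlam0) hEuler' hsumC
  -- power bookkeeping
  have hpowq : (la * p j 0 + lb * p j 1) ^ q1
      = (la * p j 0 + lb * p j 1) ^ (q1 - 1) * (la * p j 0 + lb * p j 1) := by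
    rw [← pow_succ]; congr 1; omega
  have hpowM : (la * p j 0 + lb * p j 1) ^ M1
      = (la * p j 0 + lb * p j 1) ^ (M1 - 1) * (la * p j 0 + lb * p j 1) := by
    rw [← pow_succ]; congr 1; omega
  -- the polynomial
  set F := C c1 * (P * (lin la lb ^ q1 * X 2)) + C c2 * (P * lin la lb ^ M1)
      + C c3 * (P * (lin (p j 1) (-(p j 0)) * lin la lb ^ (M1 - 1))) with hFdef
  refine ⟨F, ?_, ?_, ?_⟩
  · -- membership
    have hX2 : IsWeightedHomogeneous (wt n) (X 2 : MvPolynomial (Fin 3) ℂ) n := by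
      have := isWeightedHomogeneous_X ℂ (wt n) 2
      simpa [wt] using this
    have m1 : P * (lin la lb ^ q1 * X 2) ∈ V d n := by
      constructor
      · have := hPhom.mul ((lin_pow_hom n la lb q1).mul hX2)
        show _ ∈ weightedHomogeneousSubmodule ℂ (wt n) d
        rwa [show 2 * (N - 1) + (q1 + n) = d by omega] at this
      · show degreeOf 2 _ ≤ 3
        refine le_trans (degreeOf_mul_le _ _ _) ?_
        have h2 : degreeOf 2 (lin la lb ^ q1 * X 2) ≤ 1 := by
          refine le_trans (degreeOf_mul_le _ _ _) ?_
          rw [lin_pow_degZ]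
          simp [degreeOf_X]
        rw [hPz]
        omega
    have m2 : P * lin la lb ^ M1 ∈ V d n := by
      constructor
      · have := hPhom.mul (lin_pow_hom n la lb M1)
        show _ ∈ weightedHomogeneousSubmodule ℂ (wt n) d
        rwa [show 2 * (N - 1) + M1 = d from hM1d] at this
      · show degreeOf 2 _ ≤ 3
        refine le_trans (degreeOf_mul_le _ _ _) ?_
        rw [hPz, lin_pow_degZ]
        omega
    have m3 : P * (lin (p j 1) (-(p j 0)) * lin la lb ^ (M1 - 1)) ∈ V d n := by
      constructor
      · have := hPhom.mul ((lin_hom n (p j 1) (-(p j 0))).mul (lin_pow_hom n la lb (M1 - 1)))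
        show _ ∈ weightedHomogeneousSubmodule ℂ (wt n) d
        rwa [show 2 * (N - 1) + (1 + (M1 - 1)) = d by omega] at this
      · show degreeOf 2 _ ≤ 3
        refine le_trans (degreeOf_mul_le _ _ _) ?_
        have h2 : degreeOf 2 (lin (p j 1) (-(p j 0)) * lin la lb ^ (M1 - 1)) ≤ 0 := by
          refine le_trans (degreeOf_mul_le _ _ _) ?_
          rw [lin_degZ, lin_pow_degZ]
        rw [hPz]
        omega
    rw [hFdef]
    refine Submodule.add_mem _ (Submodule.add_mem _ ?_ ?_) ?_
    · rw [← smul_eq_C_mul]; exact Submodule.smul_mem _ _ m1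
    · rw [← smul_eq_C_mul]; exact Submodule.smul_mem _ _ m2
    · rw [← smul_eq_C_mul]; exact Submodule.smul_mem _ _ m3
  · -- gradient at p j
    have hLj : p j 1 * p j 0 + (-(p j 0)) * p j 1 = 0 := by ring
    intro i
    fin_cases i
    · show eval (p j) (pderiv 0 F) = v 0
      rw [hFdef]
      simp only [map_add, pderiv_C_mul, eval_mul, eval_C]
      rw [grad_mul (p j) P (lin la lb ^ q1 * X 2) 0,
        grad_mul (p j) P (lin la lb ^ M1) 0,
        grad_mul (p j) P (lin (p j 1) (-(p j 0)) * lin la lb ^ (M1 - 1)) 0,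
        (evalR1 la lb q1 (p j)).1, (evalR2 la lb M1 (p j)).1,
        (evalR3 (p j 1) (-(p j 0)) la lb (M1 - 1) (p j) hLj).1,
        (evalR1 la lb q1 (p j)).2.1, (evalR2 la lb M1 (p j)).2.1,
        (evalR3 (p j 1) (-(p j 0)) la lb (M1 - 1) (p j) hLj).2.1, hpowq, hpowM]
      linear_combination hs0
    · show eval (p j) (pderiv 1 F) = v 1
      rw [hFdef]
      simp only [map_add, pderiv_C_mul, eval_mul, eval_C]
      rw [grad_mul (p j) P (lin la lb ^ q1 * X 2) 1,
        grad_mul (p j) P (lin la lb ^ M1) 1,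
        grad_mul (p j) P (lin (p j 1) (-(p j 0)) * lin la lb ^ (M1 - 1)) 1,
        (evalR1 la lb q1 (p j)).1, (evalR2 la lb M1 (p j)).1,
        (evalR3 (p j 1) (-(p j 0)) la lb (M1 - 1) (p j) hLj).1,
        (evalR1 la lb q1 (p j)).2.2.1, (evalR2 la lb M1 (p j)).2.2.1,
        (evalR3 (p j 1) (-(p j 0)) la lb (M1 - 1) (p j) hLj).2.2.1, hpowq, hpowM]
      linear_combination hs1
    · show eval (p j) (pderiv 2 F) = v 2
      rw [hFdef]
      simp only [map_add, pderiv_C_mul, eval_mul, eval_C]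
      rw [grad_mul (p j) P (lin la lb ^ q1 * X 2) 2,
        grad_mul (p j) P (lin la lb ^ M1) 2,
        grad_mul (p j) P (lin (p j 1) (-(p j 0)) * lin la lb ^ (M1 - 1)) 2,
        (evalR1 la lb q1 (p j)).1, (evalR2 la lb M1 (p j)).1,
        (evalR3 (p j 1) (-(p j 0)) la lb (M1 - 1) (p j) hLj).1,
        (evalR1 la lb q1 (p j)).2.2.2, (evalR2 la lb M1 (p j)).2.2.2,
        (evalR3 (p j 1) (-(p j 0)) la lb (M1 - 1) (p j) hLj).2.2.2, hPpd2, hpowq]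
      simp only [map_zero]
      linear_combination hs2
  · -- vanishing at other points
    intro k hkj i
    obtain ⟨hk0, hk1⟩ := hvanish k hkj
    rw [hFdef]
    simp only [map_add, pderiv_C_mul, eval_mul, eval_C]
    rw [grad_mul (p k) P (lin la lb ^ q1 * X 2) i,
      grad_mul (p k) P (lin la lb ^ M1) i,
      grad_mul (p k) P (lin (p j 1) (-(p j 0)) * lin la lb ^ (M1 - 1)) i,
      hk0, hk1 i]
    ring
/-- Lemma 2.5 (main case): for `n ≥ 1`, `N ≥ 1`, `d ≥ 2N + 3n - 1`, and `N` points of `𝔽ₙ`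
off the exceptional section and lying on pairwise distinct lines of the ruling, the evaluation
map `V_{d,n} → Mat_{3×N}(ℂ)`, sending `f` to the matrix of its partial derivatives at the
points, is surjective. -/
theorem ev_surjective (n N d : ℕ) (hn : 1 ≤ n) (hN : 1 ≤ N) (hd : 2 * N + 3 * n - 1 ≤ d)
    (p : Fin N → Fin 3 → ℂ)
    (hp : ∀ j, (p j 0, p j 1) ≠ (0, 0))
    (hdist : ∀ j j', j ≠ j' → p j 0 * p j' 1 ≠ p j' 0 * p j 1) :
    Function.Surjective (fun f : V d n =>
      Matrix.of fun (i : Fin 3) (j : Fin N) =>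
        eval (p j) (pderiv i (f : MvPolynomial (Fin 3) ℂ))) := by
  intro MT
  choose f hmem hgrad hvan using fun j => onePoint n N d hn hN hd p hp hdist j (fun i => MT i j)
  refine ⟨⟨∑ j, f j, Submodule.sum_mem _ fun j _ => hmem j⟩, ?_⟩
  ext i k
  show eval (p k) (pderiv i (∑ j, f j)) = MT i k
  rw [map_sum, map_sum]
  rw [Finset.sum_eq_single k]
  · exact hgrad k i
  · intro j _ hjk
    exact hvan j k (Ne.symm hjk) i
  · intro h
    exact absurd (Finset.mem_univ k) h

end
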